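/- arXiv:1512.04790 — 3 statements merged into one kernel-verified Lean document; each statement's English description precedes it below -/
import Mathlib

section
/- Let 0 < p ≤ 2. There is a constant C_p > 0, depending only on p, such that for every f = (f_{IJ}) ∈ H^p(δ²) and every finite family φ^{(1)}, …, φ^{(m)} of bounded real sequences indexed by the dyadic rectangles, (∑_{i=1}^m ‖∑_{I×J} φ^{(i)}_{IJ} f_{IJ} h_{I×J}‖_{H^p(δ²)}²)^{1/2} ≤ C_p · ‖f‖_{H^p(δ²)} · sup_{I×J} (∑_{i=1}^m (φ^{(i)}_{IJ})²)^{1/2}. In other words, the multiplication operator φ ↦ ∑_{I×J} φ_{IJ} f_{IJ} h_{I×J} from ℓ∞ (indexed by the dyadic rectangles) to H^p(δ²) is 2-summing with 2-summing norm at most C_p‖f‖_{H^p(δ²)}. -/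
open MeasureTheory Set
open scoped ENNReal

/-- A dyadic interval `[k/2^n, (k+1)/2^n) ⊆ [0,1)`. -/
structure DyadicInterval where
  n : ℕ
  k : ℕ
  hk : k < 2 ^ n

namespace DyadicInterval

/-- Left endpoint. -/
noncomputable def left (I : DyadicInterval) : ℝ := I.k / 2 ^ I.n

/-- Right endpoint. -/
noncomputable def right (I : DyadicInterval) : ℝ := (I.k + 1) / 2 ^ I.n

/-- Midpoint. -/
noncomputable def mid (I : DyadicInterval) : ℝ := (I.k + 1 / 2) / 2 ^ I.n

/-- The underlying point set of the dyadic interval. -/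
noncomputable def set (I : DyadicInterval) : Set ℝ := Set.Ico I.left I.right

/-- The length `|I| = 2^{-n}`. -/
noncomputable def len (I : DyadicInterval) : ℝ := 1 / 2 ^ I.n

/-- The `L^∞`-normalised Haar function `h_I`: `+1` on the left half of `I`,
`-1` on the right half of `I`, `0` elsewhere. -/
noncomputable def haar (I : DyadicInterval) (s : ℝ) : ℝ :=
  if s ∈ Set.Ico I.left I.mid then 1
  else if s ∈ Set.Ico I.mid I.right then -1
  else 0

end DyadicInterval

/-- A dyadic rectangle `I × J`. -/
abbrev DyadicRect := DyadicInterval × DyadicInterval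

namespace DyadicRect

/-- The underlying point set of the dyadic rectangle. -/
noncomputable def set (R : DyadicRect) : Set (ℝ × ℝ) := R.1.set ×ˢ R.2.set

/-- The area `|I||J|`. -/
noncomputable def area (R : DyadicRect) : ℝ := R.1.len * R.2.len

/-- The 2D Haar function `h_{I×J}(s,t) = h_I(s) h_J(t)`. -/
noncomputable def haar (R : DyadicRect) (x : ℝ × ℝ) : ℝ := R.1.haar x.1 * R.2.haar x.2

end DyadicRect

/-- The unit square `[0,1]²`. -/
noncomputable def unitSq : Set (ℝ × ℝ) := Set.Icc (0:ℝ) 1 ×ˢ Set.Icc (0:ℝ) 1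

/-- The square function `S(f)(s,t) = (∑_{I×J} f_{I×J}² 1_{I×J}(s,t))^{1/2}`,
valued in `ℝ≥0∞`. -/
noncomputable def sqS (f : DyadicRect → ℝ) (x : ℝ × ℝ) : ℝ≥0∞ :=
  (∑' R : DyadicRect, Set.indicator R.set (fun _ => ENNReal.ofReal (f R ^ 2)) x) ^ (1/2 : ℝ)

/-- The `H^p(δ²)` quasi-norm `‖f‖_{H^p} = (∫_{[0,1]²} S(f)^p dm)^{1/p}`, valued in `ℝ≥0∞`.
Membership `f ∈ H^p(δ²)` is expressed as `Hnorm p f ≠ ∞`. -/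
noncomputable def Hnorm (p : ℝ) (f : DyadicRect → ℝ) : ℝ≥0∞ :=
  (∫⁻ x in unitSq, sqS f x ^ p) ^ (1/p)

/-- `‖f‖₂ = ‖f‖_{H²(δ²)} = (∑_{I×J} f_{I×J}² |I||J|)^{1/2}`. -/
noncomputable def l2norm (f : DyadicRect → ℝ) : ℝ≥0∞ :=
  (∑' R : DyadicRect, ENNReal.ofReal (f R ^ 2) * ENNReal.ofReal R.area) ^ (1/2 : ℝ)

/-- The level set `F_n = {(s,t) ∈ [0,1]² : S(f)(s,t) > 2^n}`. -/
noncomputable def Fset (f : DyadicRect → ℝ) (n : ℤ) : Set (ℝ × ℝ) :=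
  {x ∈ unitSq | (2 : ℝ≥0∞) ^ (n : ℝ) < sqS f x}

/-- The collection `R_n` of dyadic rectangles `I×J` with
`|(I×J) ∩ F_n| > |I×J|/2` and `|(I×J) ∩ F_{n+1}| ≤ |I×J|/2`. -/
noncomputable def Rcoll (f : DyadicRect → ℝ) (n : ℤ) : Set DyadicRect :=
  {R | ENNReal.ofReal R.area / 2 < volume (R.set ∩ Fset f n) ∧
       volume (R.set ∩ Fset f (n + 1)) ≤ ENNReal.ofReal R.area / 2}

/-- The atom `f_n = ∑_{I×J ∈ R_n} f_{I×J} h_{I×J}`, i.e. the coefficient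
sequence of `f` restricted to `R_n`. -/
noncomputable def fAtom (f : DyadicRect → ℝ) (n : ℤ) : DyadicRect → ℝ :=
  (Rcoll f n).indicator f

/-- The point set `R_n* = ⋃_{I×J ∈ R_n} I×J`. -/
noncomputable def RcollStar (f : DyadicRect → ℝ) (n : ℤ) : Set (ℝ × ℝ) :=
  ⋃ R ∈ Rcoll f n, R.set

/-! ### Auxiliary material for the proof -/

namespace TwoSummingAux

/-- The square of the square function, `σ(f)(x) = ∑_{R} f_R² 1_R(x)`. -/
noncomputable def sg (f : DyadicRect → ℝ) (x : ℝ × ℝ) : ℝ≥0∞ :=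
  ∑' R : DyadicRect, Set.indicator R.set (fun _ => ENNReal.ofReal (f R ^ 2)) x

instance : Countable DyadicInterval :=
  Function.Injective.countable (f := fun I : DyadicInterval => (I.n, I.k))
    (fun I J h => by cases I; cases J; simpa using h)

lemma measurableSet_rect (R : DyadicRect) : MeasurableSet R.set := by
  have h : R.set = Set.Ico R.1.left R.1.right ×ˢ Set.Ico R.2.left R.2.right := rfl
  rw [h]
  exact measurableSet_Ico.prod measurableSet_Ico

lemma measurable_sg (f : DyadicRect → ℝ) : Measurable (sg f) :=
  Measurable.ennreal_tsum fun R => measurable_const.indicator (measurableSet_rect R)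

lemma sqS_pow (f : DyadicRect → ℝ) (p : ℝ) (x : ℝ × ℝ) :
    sqS f x ^ p = sg f x ^ (p / 2) := by
  show (sg f x ^ (1/2 : ℝ)) ^ p = sg f x ^ (p / 2)
  rw [← ENNReal.rpow_mul]
  congr 1
  ring

lemma Hnorm_eq (p : ℝ) (f : DyadicRect → ℝ) :
    Hnorm p f = (∫⁻ x in unitSq, sg f x ^ (p/2)) ^ (1/p) := by
  rw [Hnorm]
  congr 1
  exact lintegral_congr fun x => sqS_pow f p x

lemma ptwise_id {a b K : ℝ≥0∞} (hK : K ≠ ∞) (hb : b ≤ K * a) (ha : a ≠ ∞)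
    {p : ℝ} (hp0 : 0 < p) (hp2 : p < 2) :
    b ^ (p/2) = (b * a ^ ((p-2)/2)) ^ (p/2) * a ^ (p*(2-p)/4) := by
  rcases eq_or_ne a 0 with h0 | h0
  · have hb0 : b = 0 := le_antisymm (by simpa [h0] using hb) zero_le
    subst h0; subst hb0
    rw [zero_mul, ENNReal.zero_rpow_of_pos (by positivity : (0:ℝ) < p/2), zero_mul]
  · rw [ENNReal.mul_rpow_of_nonneg _ _ (by positivity : (0:ℝ) ≤ p/2),
      ← ENNReal.rpow_mul, mul_assoc, ← ENNReal.rpow_add _ _ h0 ha,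
      show (p-2)/2 * (p/2) + p*(2-p)/4 = 0 by ring, ENNReal.rpow_zero, mul_one]

lemma ptwise_a_le {a : ℝ≥0∞} {p : ℝ} (hp0 : 0 < p) (hp2 : p ≤ 2) :
    a * a ^ ((p-2)/2) ≤ a ^ (p/2) := by
  rcases eq_or_ne a 0 with h | h
  · simp [h]
  rcases eq_or_ne a ∞ with h' | h'
  · rw [h', ENNReal.top_rpow_of_pos (by positivity : (0:ℝ) < p/2)]
    exact le_top
  · have he : a ^ ((1:ℝ) + (p-2)/2) = a * a ^ ((p-2)/2) := by
      rw [ENNReal.rpow_add _ _ h h', ENNReal.rpow_one]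
    rw [← he, show (1:ℝ) + (p-2)/2 = p/2 by ring]

lemma sum_sg_le (f : DyadicRect → ℝ) {m : ℕ} (φ : Fin m → DyadicRect → ℝ) (x : ℝ × ℝ) :
    ∑ i : Fin m, sg (fun R => φ i R * f R) x ≤
      (⨆ R : DyadicRect, ENNReal.ofReal (∑ i : Fin m, φ i R ^ 2)) * sg f x := by
  set K := ⨆ R : DyadicRect, ENNReal.ofReal (∑ i : Fin m, φ i R ^ 2) with hK
  calc ∑ i : Fin m, sg (fun R => φ i R * f R) x
      = ∑' R : DyadicRect, ∑ i : Fin m,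
          Set.indicator R.set (fun _ => ENNReal.ofReal ((φ i R * f R) ^ 2)) x := by
        simp only [sg]
        rw [← tsum_fintype (L := .unconditional _), ENNReal.tsum_comm]
        exact tsum_congr fun R => tsum_fintype _
    _ ≤ ∑' R : DyadicRect, K * Set.indicator R.set (fun _ => ENNReal.ofReal (f R ^ 2)) x := by
        refine ENNReal.tsum_le_tsum fun R => ?_
        by_cases hx : x ∈ R.set
        · simp only [Set.indicator_of_mem hx]
          rw [← ENNReal.ofReal_sum_of_nonneg (fun i _ => by positivity),
            show ∑ i : Fin m, (φ i R * f R)^2 = (∑ i : Fin m, φ i R ^ 2) * f R ^ 2 by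
              rw [Finset.sum_mul]; exact Finset.sum_congr rfl fun i _ => mul_pow _ _ 2,
            ENNReal.ofReal_mul (by positivity)]
          exact mul_le_mul_left
            (le_iSup (fun R => ENNReal.ofReal (∑ i : Fin m, φ i R ^ 2)) R) _
        · simp [Set.indicator_of_notMem hx]
    _ = K * sg f x := by rw [ENNReal.tsum_mul_left]; rfl

end TwoSummingAux

open TwoSummingAux in

/-- the multiplication operator `M_f : ℓ∞ → H^p(δ²)` is 2-summing
with 2-summing norm at most `C_p ‖f‖_{H^p(δ²)}`. -/
theorem mult_operator_two_summing (p : ℝ) (hp0 : 0 < p) (hp2 : p ≤ 2) :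
    ∃ C : ℝ, 0 < C ∧
      ∀ f : DyadicRect → ℝ, Hnorm p f ≠ ∞ →
        ∀ (m : ℕ) (φ : Fin m → DyadicRect → ℝ),
          (∀ i, ∃ M : ℝ, ∀ R, |φ i R| ≤ M) →
          (∑ i : Fin m, Hnorm p (fun R => φ i R * f R) ^ (2:ℝ)) ^ (1/2 : ℝ) ≤
            ENNReal.ofReal C * Hnorm p f *
              (⨆ R : DyadicRect, ENNReal.ofReal (∑ i : Fin m, φ i R ^ 2)) ^ (1/2 : ℝ) := by
  refine ⟨1, one_pos, ?_⟩
  intro f hf m φ hφ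
  classical
  set K := ⨆ R : DyadicRect, ENNReal.ofReal (∑ i : Fin m, φ i R ^ 2) with hKdef
  choose M hM using hφ
  have hK : K ≠ ∞ := by
    have hle : K ≤ ENNReal.ofReal (∑ i : Fin m, M i ^ 2) := by
      refine iSup_le fun R => ENNReal.ofReal_le_ofReal ?_
      refine Finset.sum_le_sum fun i _ => ?_
      rcases abs_le.mp (hM i R) with ⟨h1, h2⟩
      exact sq_le_sq' h1 h2
    exact ne_top_of_le_ne_top ENNReal.ofReal_ne_top hle
  set A := ∫⁻ x in unitSq, sg f x ^ (p/2) with hAdef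
  have hA : A ≠ ∞ := by
    intro h
    apply hf
    rw [Hnorm_eq, ← hAdef, h, ENNReal.top_rpow_of_pos (by positivity)]
  have hfin : ∀ᵐ x ∂(volume.restrict unitSq), sg f x ≠ ∞ := by
    have h1 : ∀ᵐ x ∂(volume.restrict unitSq), sg f x ^ (p/2) < ∞ :=
      ae_lt_top ((measurable_sg f).pow_const _) hA
    refine h1.mono fun x hx => ?_
    intro hcon
    rw [hcon, ENNReal.top_rpow_of_pos (by positivity)] at hx
    exact absurd hx (lt_irrefl _)
  have hb : ∀ (i : Fin m) x, sg (fun R => φ i R * f R) x ≤ K * sg f x := fun i x =>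
    le_trans (Finset.single_le_sum (f := fun j => sg (fun R => φ j R * f R) x)
      (fun j _ => zero_le) (Finset.mem_univ i)) (sum_sg_le f φ x)
  set I : Fin m → ℝ≥0∞ := fun i =>
    ∫⁻ x in unitSq, sg (fun R => φ i R * f R) x * sg f x ^ ((p-2)/2) with hIdef
  have key : ∀ i : Fin m, Hnorm p (fun R => φ i R * f R) ^ (2:ℝ) ≤ I i * A ^ ((2-p)/p) := by
    intro i
    have hbm : Measurable (sg (fun R => φ i R * f R)) := measurable_sg _
    rcases eq_or_lt_of_le hp2 with hpe | hplt
    · subst hpe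
      have e1 : Hnorm 2 (fun R => φ i R * f R) ^ (2:ℝ)
          = ∫⁻ x in unitSq, sg (fun R => φ i R * f R) x := by
        rw [Hnorm_eq, ← ENNReal.rpow_mul]
        norm_num
      have e2 : I i = ∫⁻ x in unitSq, sg (fun R => φ i R * f R) x := by
        rw [hIdef]
        refine lintegral_congr fun x => ?_
        norm_num
      rw [e1, e2]
      norm_num
    · have hp0' : p ≠ 0 := ne_of_gt hp0
      have h2p : (2:ℝ) - p ≠ 0 := by linarith
      have hconj : Real.HolderConjugate (2/p) (2/(2-p)) := by
        rw [Real.holderConjugate_iff]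
        constructor
        · exact (one_lt_div hp0).mpr hplt
        · rw [← one_div, ← one_div, one_div_div, one_div_div, ← add_div,
            show p + (2-p) = 2 by ring]
          norm_num
      have hw : Measurable fun x => sg f x ^ ((p-2)/2) := (measurable_sg f).pow_const _
      have hu : Measurable fun x =>
          (sg (fun R => φ i R * f R) x * sg f x ^ ((p-2)/2)) ^ (p/2) :=
        (hbm.mul hw).pow_const _
      have hv : Measurable fun x => sg f x ^ (p*(2-p)/4) := (measurable_sg f).pow_const _
      have hH := ENNReal.lintegral_mul_le_Lp_mul_Lq (volume.restrict unitSq) hconj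
        hu.aemeasurable hv.aemeasurable
      have eL : ∫⁻ x in unitSq, sg (fun R => φ i R * f R) x ^ (p/2)
          = ∫⁻ x in unitSq,
              ((fun x => (sg (fun R => φ i R * f R) x * sg f x ^ ((p-2)/2)) ^ (p/2)) *
                (fun x => sg f x ^ (p*(2-p)/4))) x := by
        refine lintegral_congr_ae (hfin.mono fun x hx => ?_)
        simpa using ptwise_id hK (hb i x) hx hp0 hplt
      have e1 : ∫⁻ x in unitSq,
          ((sg (fun R => φ i R * f R) x * sg f x ^ ((p-2)/2)) ^ (p/2)) ^ (2/p) = I i := by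
        rw [hIdef]
        refine lintegral_congr fun x => ?_
        rw [← ENNReal.rpow_mul, show (p/2) * (2/p) = 1 by field_simp, ENNReal.rpow_one]
      have e2 : ∫⁻ x in unitSq, (sg f x ^ (p*(2-p)/4)) ^ (2/(2-p)) = A := by
        rw [hAdef]
        refine lintegral_congr fun x => ?_
        rw [← ENNReal.rpow_mul, show (p*(2-p)/4) * (2/(2-p)) = p/2 by field_simp; ring]
      have main : ∫⁻ x in unitSq, sg (fun R => φ i R * f R) x ^ (p/2)
          ≤ (I i) ^ (p/2) * A ^ ((2-p)/2) := by
        rw [eL]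
        refine le_trans hH ?_
        rw [one_div_div, one_div_div, ← e1, ← e2]
      rw [Hnorm_eq, ← ENNReal.rpow_mul]
      calc (∫⁻ x in unitSq, sg (fun R => φ i R * f R) x ^ (p/2)) ^ (1/p * 2)
          ≤ ((I i) ^ (p/2) * A ^ ((2-p)/2)) ^ (1/p * 2) :=
            ENNReal.rpow_le_rpow main (by positivity)
        _ = I i * A ^ ((2-p)/p) := by
            rw [ENNReal.mul_rpow_of_nonneg _ _ (by positivity), ← ENNReal.rpow_mul,
              ← ENNReal.rpow_mul, show (p/2) * (1/p*2) = 1 by field_simp,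
              show ((2-p)/2) * (1/p*2) = (2-p)/p by field_simp, ENNReal.rpow_one]
  have hIsum : ∑ i : Fin m, I i ≤ K * A := by
    have e : ∑ i : Fin m, I i
        = ∫⁻ x in unitSq, ∑ i : Fin m,
            sg (fun R => φ i R * f R) x * sg f x ^ ((p-2)/2) := by
      rw [hIdef]
      exact (lintegral_finset_sum _ fun i _ =>
        (measurable_sg _).mul ((measurable_sg f).pow_const _)).symm
    rw [e]
    calc ∫⁻ x in unitSq, ∑ i : Fin m, sg (fun R => φ i R * f R) x * sg f x ^ ((p-2)/2)
        ≤ ∫⁻ x in unitSq, K * (sg f x * sg f x ^ ((p-2)/2)) := by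
          refine lintegral_mono fun x => ?_
          rw [← Finset.sum_mul, ← mul_assoc]
          exact mul_le_mul_left (sum_sg_le f φ x) _
      _ = K * ∫⁻ x in unitSq, sg f x * sg f x ^ ((p-2)/2) :=
          lintegral_const_mul K ((measurable_sg f).mul ((measurable_sg f).pow_const _))
      _ ≤ K * A := by
          rw [hAdef]
          exact mul_le_mul_right (lintegral_mono fun x => ptwise_a_le hp0 hp2) _
  have hfinal : (∑ i : Fin m, Hnorm p (fun R => φ i R * f R) ^ (2:ℝ)) ≤ K * A ^ (2/p) := by
    calc ∑ i : Fin m, Hnorm p (fun R => φ i R * f R) ^ (2:ℝ)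
        ≤ ∑ i : Fin m, I i * A ^ ((2-p)/p) := Finset.sum_le_sum fun i _ => key i
      _ = (∑ i : Fin m, I i) * A ^ ((2-p)/p) := (Finset.sum_mul _ _ _).symm
      _ ≤ (K * A) * A ^ ((2-p)/p) := mul_le_mul_left hIsum _
      _ = K * (A ^ (1:ℝ) * A ^ ((2-p)/p)) := by rw [mul_assoc, ENNReal.rpow_one]
      _ = K * A ^ (2/p) := by
          rw [← ENNReal.rpow_add_of_nonneg _ _ (by norm_num)
              (div_nonneg (by linarith) hp0.le),
            show (1:ℝ) + (2-p)/p = 2/p by field_simp; ring]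
  calc (∑ i : Fin m, Hnorm p (fun R => φ i R * f R) ^ (2:ℝ)) ^ (1/2 : ℝ)
      ≤ (K * A ^ (2/p)) ^ (1/2 : ℝ) := ENNReal.rpow_le_rpow hfinal (by norm_num)
    _ = ENNReal.ofReal 1 * Hnorm p f * K ^ (1/2 : ℝ) := by
        rw [ENNReal.ofReal_one, one_mul, Hnorm_eq, ← hAdef,
          ENNReal.mul_rpow_of_nonneg _ _ (by norm_num), ← ENNReal.rpow_mul,
          show (2/p) * (1/2 : ℝ) = 1/p by ring, mul_comm]
end

section
/- There is an absolute constant C > 0 such that for every 0 < p ≤ 2, every f ∈ H^p(δ²) with atomic decomposition (f_n, R_n)_{n∈ℤ}, and every n ∈ ℤ: ‖f_n‖₂² ≤ C · 2^{2n} · |F_n|. -/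
open MeasureTheory Set
open scoped ENNReal

namespace DyadicInterval

instance : Countable DyadicInterval := by
  have : Function.Injective (fun I : DyadicInterval => (I.n, I.k)) := by
    rintro ⟨n, k, h⟩ ⟨n', k', h'⟩ hh
    simp only [Prod.mk.injEq] at hh
    simp [hh.1, hh.2]
  exact this.countable

lemma left_lt_right (I : DyadicInterval) : I.left < I.right := by
  have : (0:ℝ) < 2 ^ I.n := by positivity
  rw [left, right, div_lt_div_iff₀ this this]
  nlinarith

lemma measurableSet_set (I : DyadicInterval) : MeasurableSet I.set :=
  measurableSet_Ico

lemma len_pos (I : DyadicInterval) : 0 < I.len := by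
  rw [len]; positivity

lemma volume_set (I : DyadicInterval) : volume I.set = ENNReal.ofReal I.len := by
  rw [set, Real.volume_Ico, left, right, len]
  congr 1
  field_simp
  ring

lemma volume_set_ne_top (I : DyadicInterval) : volume I.set ≠ ⊤ := by
  rw [volume_set]; exact ENNReal.ofReal_ne_top

lemma volume_set_pos (I : DyadicInterval) : 0 < volume I.set := by
  rw [volume_set]; exact ENNReal.ofReal_pos.mpr I.len_pos

lemma set_subset_Ico (I : DyadicInterval) : I.set ⊆ Set.Ico (0:ℝ) 1 := by
  intro x hx
  obtain ⟨h1, h2⟩ := hx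
  have hp : (0:ℝ) < 2 ^ I.n := by positivity
  constructor
  · refine le_trans ?_ h1
    rw [left]; positivity
  · refine lt_of_lt_of_le h2 ?_
    rw [right, div_le_one hp]
    have : (I.k : ℝ) + 1 ≤ 2 ^ I.n := by exact_mod_cast I.hk
    exact this

lemma nested {I I' : DyadicInterval} (h : I.n ≤ I'.n) (hne : (I.set ∩ I'.set).Nonempty) :
    I'.set ⊆ I.set := by
  obtain ⟨x, ⟨hx1, hx2⟩, ⟨hx3, hx4⟩⟩ := hne
  set d := I'.n - I.n with hd
  have hnd : I'.n = I.n + d := by omega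
  have hp : (0:ℝ) < 2 ^ I.n := by positivity
  have hp' : (0:ℝ) < 2 ^ I'.n := by positivity
  have h2d : (2:ℝ) ^ I'.n = 2 ^ I.n * 2 ^ d := by rw [hnd, pow_add]
  -- k * 2^d ≤ k'
  have key1 : I.k * 2 ^ d ≤ I'.k := by
    by_contra hc
    push_neg at hc
    have : (I'.k : ℝ) + 1 ≤ I.k * 2 ^ d := by exact_mod_cast hc
    have hlt : x < x := by
      calc x < I'.right := hx4
        _ = ((I'.k:ℝ) + 1) / 2 ^ I'.n := rfl
        _ ≤ ((I.k:ℝ) * 2 ^ d) / 2 ^ I'.n := by gcongr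
        _ = (I.k:ℝ) / 2 ^ I.n := by rw [h2d]; field_simp
        _ ≤ x := hx1
    exact absurd hlt (lt_irrefl x)
  have key2 : I'.k + 1 ≤ (I.k + 1) * 2 ^ d := by
    by_contra hc
    push_neg at hc
    have hc' : (I.k + 1) * 2 ^ d ≤ I'.k := by omega
    have : ((I.k:ℝ) + 1) * 2 ^ d ≤ I'.k := by exact_mod_cast hc'
    have hlt : x < x := by
      calc x < I.right := hx2
        _ = ((I.k:ℝ) + 1) / 2 ^ I.n := rfl
        _ = ((I.k:ℝ) + 1) * 2 ^ d / 2 ^ I'.n := by rw [h2d]; field_simp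
        _ ≤ (I'.k:ℝ) / 2 ^ I'.n := by gcongr
        _ ≤ x := hx3
    exact absurd hlt (lt_irrefl x)
  intro y ⟨hy1, hy2⟩
  constructor
  · calc (I.k:ℝ) / 2 ^ I.n = ((I.k:ℝ) * 2 ^ d) / 2 ^ I'.n := by rw [h2d]; field_simp
      _ ≤ (I'.k:ℝ) / 2 ^ I'.n := by gcongr; exact_mod_cast key1
      _ ≤ y := hy1
  · calc y < ((I'.k:ℝ) + 1) / 2 ^ I'.n := hy2
      _ ≤ (((I.k:ℝ) + 1) * 2 ^ d) / 2 ^ I'.n := by gcongr; exact_mod_cast key2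
      _ = ((I.k:ℝ) + 1) / 2 ^ I.n := by rw [h2d]; field_simp

lemma set_inj : Function.Injective DyadicInterval.set := by
  rintro I I' h
  have h1 : I.left = I'.left ∧ I.right = I'.right := by
    rw [set, set] at h
    exact (Set.Ico_eq_Ico_iff (Or.inl I.left_lt_right)).mp h
  have hlen : I.len = I'.len := by
    have := h1.2
    have h2 := h1.1
    rw [right, right] at this
    rw [left, left] at h2
    have : I.right - I.left = I'.right - I'.left := by
      rw [h1.1, h1.2]
    rw [right, left, right, left] at this
    have e1 : ((I.k:ℝ) + 1) / 2 ^ I.n - I.k / 2 ^ I.n = 1 / 2 ^ I.n := by field_simp; ring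
    have e2 : ((I'.k:ℝ) + 1) / 2 ^ I'.n - I'.k / 2 ^ I'.n = 1 / 2 ^ I'.n := by field_simp; ring
    rw [e1, e2] at this
    exact this
  have hn : I.n = I'.n := by
    rw [len, len] at hlen
    field_simp at hlen
    exact Nat.pow_right_injective le_rfl (by exact_mod_cast (by linarith : (2:ℝ)^I.n = 2^I'.n))
  have hk : I.k = I'.k := by
    have := h1.1
    rw [left, left, hn] at this
    have hp : (0:ℝ) < 2 ^ I'.n := by positivity
    field_simp at this
    exact_mod_cast this
  obtain ⟨n, k, _⟩ := I
  obtain ⟨n', k', _⟩ := I'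
  simp_all

end DyadicInterval

namespace DyadicCover

/-- The "bad" intervals for a set `A`: average of `1_A` exceeds `1/4`. -/
def badSet (A : Set ℝ) : Set DyadicInterval :=
  {I | volume I.set < 4 * volume (I.set ∩ A)}

/-- Weak-type covering bound for the dyadic maximal function at level 1/4. -/
lemma weak (A : Set ℝ) (hA : MeasurableSet A) :
    volume (⋃ I ∈ badSet A, I.set) ≤ 4 * volume A := by
  classical
  set Max : Set DyadicInterval :=
    {I | I ∈ badSet A ∧ ∀ I' ∈ badSet A, (I.set ∩ I'.set).Nonempty → I'.set ⊆ I.set} with hMax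
  -- every bad interval is contained in a maximal one
  have hcov : ∀ I ∈ badSet A, ∃ I₀ ∈ Max, I.set ⊆ I₀.set := by
    intro I hI
    set N : Set ℕ := {m | ∃ I' : DyadicInterval, I'.n = m ∧ I' ∈ badSet A ∧ I.set ⊆ I'.set} with hN
    have hIN : I.n ∈ N := ⟨I, rfl, hI, subset_rfl⟩
    have hne : N.Nonempty := ⟨I.n, hIN⟩
    obtain ⟨I₀, hI₀n, hI₀bad, hI₀sub⟩ := Nat.sInf_mem hne
    refine ⟨I₀, ⟨hI₀bad, ?_⟩, hI₀sub⟩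
    intro I' hI' hint
    rcases le_or_gt I₀.n I'.n with hle | hlt
    · exact DyadicInterval.nested hle hint
    · exfalso
      have hsub : I₀.set ⊆ I'.set :=
        DyadicInterval.nested hlt.le (by rwa [Set.inter_comm] at hint)
      have : I'.n ∈ N := ⟨I', rfl, hI', hI₀sub.trans hsub⟩
      have := Nat.sInf_le this
      omega
  have hU : (⋃ I ∈ badSet A, I.set) = ⋃ I ∈ Max, I.set := by
    apply Set.Subset.antisymm
    · intro x hx
      simp only [Set.mem_iUnion] at hx ⊢
      obtain ⟨I, hI, hxI⟩ := hx
      obtain ⟨I₀, hI₀, hsub⟩ := hcov I hI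
      exact ⟨I₀, hI₀, hsub hxI⟩
    · intro x hx
      simp only [Set.mem_iUnion] at hx ⊢
      obtain ⟨I, hI, hxI⟩ := hx
      exact ⟨I, hI.1, hxI⟩
  have hdisj : Max.PairwiseDisjoint DyadicInterval.set := by
    intro I hI I' hI' hne
    by_contra hc
    rw [Function.onFun, Set.not_disjoint_iff_nonempty_inter] at hc
    have h1 : I'.set ⊆ I.set := hI.2 I' hI'.1 hc
    have h2 : I.set ⊆ I'.set := hI'.2 I hI.1 (by rwa [Set.inter_comm] at hc)
    exact hne (DyadicInterval.set_inj (Set.Subset.antisymm h2 h1))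
  have hdisj' : Max.PairwiseDisjoint (fun I => I.set ∩ A) := by
    intro I hI I' hI' hne
    exact (hdisj hI hI' hne).mono Set.inter_subset_left Set.inter_subset_left
  have hcnt : Max.Countable := Max.to_countable
  calc volume (⋃ I ∈ badSet A, I.set) = volume (⋃ I ∈ Max, I.set) := by rw [hU]
    _ = ∑' I : Max, volume (I : DyadicInterval).set :=
        measure_biUnion hcnt hdisj (fun I _ => I.measurableSet_set)
    _ ≤ ∑' I : Max, 4 * volume ((I : DyadicInterval).set ∩ A) := by
        apply ENNReal.tsum_le_tsum
        intro I
        exact le_of_lt I.2.1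
    _ = 4 * ∑' I : Max, volume ((I : DyadicInterval).set ∩ A) := ENNReal.tsum_mul_left
    _ = 4 * volume (⋃ I ∈ Max, (I.set ∩ A)) := by
        rw [measure_biUnion hcnt hdisj' (fun I hI => (I.measurableSet_set).inter hA)]
    _ ≤ 4 * volume A := by
        gcongr
        intro x hx
        simp only [Set.mem_iUnion] at hx
        obtain ⟨I, _, _, h⟩ := hx
        exact h

end DyadicCover

namespace DyadicCover

/-- Enlargement in the second (vertical) variable. -/
def Eright (B : Set (ℝ × ℝ)) : Set (ℝ × ℝ) :=
  {x | ∃ J : DyadicInterval, x.2 ∈ J.set ∧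
        volume J.set < 4 * volume (J.set ∩ {t | (x.1, t) ∈ B})}

/-- Enlargement in the first (horizontal) variable. -/
def Eleft (B : Set (ℝ × ℝ)) : Set (ℝ × ℝ) :=
  {x | ∃ I : DyadicInterval, x.1 ∈ I.set ∧
        volume I.set < 4 * volume (I.set ∩ {s | (s, x.2) ∈ B})}

lemma measurable_slice_right {B : Set (ℝ × ℝ)} (hB : MeasurableSet B) (J : DyadicInterval) :
    Measurable fun s => volume (J.set ∩ {t | (s, t) ∈ B}) := by
  have h : ∀ s : ℝ, J.set ∩ {t | (s, t) ∈ B}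
      = Prod.mk s ⁻¹' ((Set.univ ×ˢ J.set) ∩ B) := by
    intro s
    ext t
    simp [Set.mem_inter_iff, Set.mem_prod, And.comm]
  simp_rw [h]
  exact measurable_measure_prodMk_left ((MeasurableSet.univ.prod J.measurableSet_set).inter hB)

lemma measurable_slice_left {B : Set (ℝ × ℝ)} (hB : MeasurableSet B) (I : DyadicInterval) :
    Measurable fun t => volume (I.set ∩ {s | (s, t) ∈ B}) := by
  have h : ∀ t : ℝ, I.set ∩ {s | (s, t) ∈ B}
      = (fun s => (s, t)) ⁻¹' ((I.set ×ˢ Set.univ) ∩ B) := by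
    intro t
    ext s
    simp [Set.mem_inter_iff, Set.mem_prod]
  simp_rw [h]
  exact measurable_measure_prodMk_right ((I.measurableSet_set.prod MeasurableSet.univ).inter hB)

lemma Eright_eq (B : Set (ℝ × ℝ)) :
    Eright B = ⋃ J : DyadicInterval,
      ({s | volume J.set < 4 * volume (J.set ∩ {t | (s, t) ∈ B})} ×ˢ J.set) := by
  ext ⟨s, t⟩
  simp only [Eright, Set.mem_iUnion, Set.mem_setOf_eq, Set.mem_prod]
  try tauto

lemma Eleft_eq (B : Set (ℝ × ℝ)) :
    Eleft B = ⋃ I : DyadicInterval,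
      (I.set ×ˢ {t | volume I.set < 4 * volume (I.set ∩ {s | (s, t) ∈ B})}) := by
  ext ⟨s, t⟩
  simp only [Eleft, Set.mem_iUnion, Set.mem_setOf_eq, Set.mem_prod]
  try tauto

lemma measurableSet_Eright {B : Set (ℝ × ℝ)} (hB : MeasurableSet B) :
    MeasurableSet (Eright B) := by
  rw [Eright_eq]
  refine MeasurableSet.iUnion fun J => ?_
  exact (measurableSet_lt measurable_const
    ((measurable_slice_right hB J).const_mul 4)).prod J.measurableSet_set

lemma measurableSet_Eleft {B : Set (ℝ × ℝ)} (hB : MeasurableSet B) :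
    MeasurableSet (Eleft B) := by
  rw [Eleft_eq]
  refine MeasurableSet.iUnion fun I => ?_
  exact I.measurableSet_set.prod (measurableSet_lt measurable_const
    ((measurable_slice_left hB I).const_mul 4))

lemma volume_Eright_le {B : Set (ℝ × ℝ)} (hB : MeasurableSet B) :
    volume (Eright B) ≤ 4 * volume B := by
  have hE := measurableSet_Eright hB
  calc volume (Eright B) = ∫⁻ s, volume (Prod.mk s ⁻¹' Eright B) := by
        rw [Measure.volume_eq_prod ℝ ℝ]; exact Measure.prod_apply hE
    _ ≤ ∫⁻ s, 4 * volume {t | (s, t) ∈ B} := by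
        apply lintegral_mono
        intro s
        have h : Prod.mk s ⁻¹' Eright B = ⋃ J ∈ badSet {t | (s, t) ∈ B}, J.set := by
          ext t
          simp only [Set.mem_preimage, Eright, Set.mem_setOf_eq, Set.mem_iUnion, badSet]
          tauto
        simp only [h]
        exact weak _ (hB.preimage measurable_prodMk_left)
    _ = 4 * ∫⁻ s, volume (Prod.mk s ⁻¹' B) :=
        lintegral_const_mul 4 (measurable_measure_prodMk_left hB)
    _ = 4 * volume B := by rw [Measure.volume_eq_prod ℝ ℝ, Measure.prod_apply hB]

lemma volume_Eleft_le {B : Set (ℝ × ℝ)} (hB : MeasurableSet B) :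
    volume (Eleft B) ≤ 4 * volume B := by
  have hE := measurableSet_Eleft hB
  calc volume (Eleft B) = ∫⁻ t, volume ((fun s => (s, t)) ⁻¹' Eleft B) := by
        rw [Measure.volume_eq_prod ℝ ℝ]; exact Measure.prod_apply_symm hE
    _ ≤ ∫⁻ t, 4 * volume {s | (s, t) ∈ B} := by
        apply lintegral_mono
        intro t
        have h : (fun s => (s, t)) ⁻¹' Eleft B = ⋃ I ∈ badSet {s | (s, t) ∈ B}, I.set := by
          ext s
          simp only [Set.mem_preimage, Eleft, Set.mem_setOf_eq, Set.mem_iUnion, badSet]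
          tauto
        simp only [h]
        exact weak _ (hB.preimage measurable_prodMk_right)
    _ = 4 * ∫⁻ t, volume ((fun s => (s, t)) ⁻¹' B) :=
        lintegral_const_mul 4 (measurable_measure_prodMk_right hB)
    _ = 4 * volume B := by rw [Measure.volume_eq_prod ℝ ℝ, Measure.prod_apply_symm hB]

end DyadicCover

namespace DyadicRect

lemma measurableSet_set (R : DyadicRect) : MeasurableSet R.set :=
  R.1.measurableSet_set.prod R.2.measurableSet_set

lemma volume_set (R : DyadicRect) : volume R.set = ENNReal.ofReal R.area := by
  rw [DyadicRect.set, Measure.volume_eq_prod ℝ ℝ, Measure.prod_prod,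
    R.1.volume_set, R.2.volume_set, area,
    ENNReal.ofReal_mul R.1.len_pos.le]

lemma volume_set_ne_top (R : DyadicRect) : volume R.set ≠ ⊤ := by
  rw [volume_set]; exact ENNReal.ofReal_ne_top

lemma area_pos (R : DyadicRect) : 0 < R.area :=
  mul_pos R.1.len_pos R.2.len_pos

lemma set_subset_unitSq (R : DyadicRect) : R.set ⊆ unitSq := by
  rintro ⟨s, t⟩ ⟨hs, ht⟩
  have h1 := R.1.set_subset_Ico hs
  have h2 := R.2.set_subset_Ico ht
  exact ⟨⟨h1.1, h1.2.le⟩, ⟨h2.1, h2.2.le⟩⟩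

end DyadicRect

lemma measurable_sqS (f : DyadicRect → ℝ) : Measurable (sqS f) := by
  apply Measurable.comp (ENNReal.continuous_rpow_const.measurable)
  exact Measurable.ennreal_tsum fun R => measurable_const.indicator R.measurableSet_set

lemma measurableSet_unitSq : MeasurableSet unitSq :=
  measurableSet_Icc.prod measurableSet_Icc

lemma measurableSet_Fset (f : DyadicRect → ℝ) (n : ℤ) : MeasurableSet (Fset f n) := by
  have : Fset f n = unitSq ∩ {x | (2 : ℝ≥0∞) ^ (n : ℝ) < sqS f x} := by
    ext x; simp [Fset, Set.mem_inter_iff, And.comm]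
  rw [this]
  exact measurableSet_unitSq.inter (measurableSet_lt measurable_const (measurable_sqS f))

open DyadicCover in
lemma rcoll_subset (f : DyadicRect → ℝ) (n : ℤ) {R : DyadicRect} (hR : R ∈ Rcoll f n) :
    R.set ⊆ Eleft (Eright (Fset f n)) := by
  obtain ⟨I, J⟩ := R
  set F := Fset f n with hFdef
  have hF : MeasurableSet F := measurableSet_Fset f n
  set vI := volume I.set with hvI
  set vJ := volume J.set with hvJ
  set φ : ℝ → ℝ≥0∞ := fun s => volume (J.set ∩ {t | (s, t) ∈ F}) with hφ
  set G : Set ℝ := I.set ∩ {s | vJ < 4 * φ s} with hG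
  have hGmeas : MeasurableSet G :=
    I.measurableSet_set.inter
      (measurableSet_lt measurable_const ((measurable_slice_right hF J).const_mul 4))
  have hvItop : vI ≠ ⊤ := I.volume_set_ne_top
  have hvJtop : vJ ≠ ⊤ := J.volume_set_ne_top
  have harea : ENNReal.ofReal (DyadicRect.area (I, J)) = vI * vJ := by
    rw [DyadicRect.area, ENNReal.ofReal_mul I.len_pos.le, hvI, hvJ,
      I.volume_set, J.volume_set]
  -- main claim: vI < 4 * volume G
  have hGvol : vI < 4 * volume G := by
    by_contra hc
    push_neg at hc
    -- compute volume ((I,J).set ∩ F) via slices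
    have hmeasIJF : MeasurableSet (DyadicRect.set (I, J) ∩ F) :=
      (DyadicRect.measurableSet_set (I, J)).inter hF
    have hint : volume (DyadicRect.set (I, J) ∩ F)
        = ∫⁻ s, volume (Prod.mk s ⁻¹' (DyadicRect.set (I, J) ∩ F)) := by
      rw [Measure.volume_eq_prod ℝ ℝ]; exact Measure.prod_apply hmeasIJF
    set h : ℝ → ℝ≥0∞ :=
      fun s => G.indicator (fun _ => vJ) s + I.set.indicator (fun _ => vJ / 4) s with hh
    have hbound : ∀ s, volume (Prod.mk s ⁻¹' (DyadicRect.set (I, J) ∩ F)) ≤ h s := by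
      intro s
      by_cases hsI : s ∈ I.set
      · have hpre : Prod.mk s ⁻¹' (DyadicRect.set (I, J) ∩ F) = J.set ∩ {t | (s, t) ∈ F} := by
          ext t
          simp only [Set.mem_preimage, Set.mem_inter_iff, DyadicRect.set, Set.mem_prod,
            Set.mem_setOf_eq]
          tauto
        rw [hpre]
        by_cases hsG : s ∈ G
        · calc volume (J.set ∩ {t | (s, t) ∈ F}) ≤ vJ := by
                rw [hvJ]; exact measure_mono Set.inter_subset_left
            _ ≤ h s := by
              rw [hh]
              simp only [Set.indicator_of_mem hsG]
              exact le_add_of_nonneg_right zero_le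
        · have hns : ¬ vJ < 4 * φ s := fun hcon => hsG ⟨hsI, hcon⟩
          push_neg at hns
          have : φ s ≤ vJ / 4 := by
            refine (ENNReal.le_div_iff_mul_le (Or.inl (by norm_num))
              (Or.inl (by norm_num))).mpr ?_
            rw [mul_comm]; exact hns
          calc volume (J.set ∩ {t | (s, t) ∈ F}) = φ s := rfl
            _ ≤ vJ / 4 := this
            _ ≤ h s := by
              rw [hh]
              simp only [Set.indicator_of_mem hsI, Set.indicator_of_notMem hsG]
              exact le_add_of_nonneg_left zero_le
      · have hpre : Prod.mk s ⁻¹' (DyadicRect.set (I, J) ∩ F) = ∅ := by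
          ext t
          simp only [Set.mem_preimage, Set.mem_inter_iff, DyadicRect.set, Set.mem_prod,
            Set.mem_empty_iff_false, iff_false, not_and]
          intro hcon
          exact absurd hcon.1 hsI
        rw [hpre]
        simp
    have hinth : ∫⁻ s, h s = vJ * volume G + vJ / 4 * vI := by
      rw [hh]
      rw [lintegral_add_left (measurable_const.indicator hGmeas)]
      rw [lintegral_indicator_const hGmeas, lintegral_indicator_const I.measurableSet_set]
    have hle : volume (DyadicRect.set (I, J) ∩ F) ≤ vJ * volume G + vJ / 4 * vI := by
      rw [hint, ← hinth]
      exact lintegral_mono hbound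
    -- upper bound: 4 * (...) ≤ 2 * (vI * vJ)
    have hup : 4 * volume (DyadicRect.set (I, J) ∩ F) ≤ 2 * (vI * vJ) := by
      calc 4 * volume (DyadicRect.set (I, J) ∩ F)
          ≤ 4 * (vJ * volume G + vJ / 4 * vI) := by gcongr
        _ = vJ * (4 * volume G) + (vJ / 4 * 4) * vI := by ring
        _ = vJ * (4 * volume G) + vJ * vI := by
            rw [ENNReal.div_mul_cancel (by norm_num) (by norm_num)]
        _ ≤ vJ * vI + vJ * vI := by gcongr
        _ = 2 * (vI * vJ) := by ring
    -- lower bound from hR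
    have hlow : 2 * (vI * vJ) < 4 * volume (DyadicRect.set (I, J) ∩ F) := by
      have h1 := hR.1
      rw [harea] at h1
      have h2 : vI * vJ < volume (DyadicRect.set (I, J) ∩ F) * 2 :=
        (ENNReal.div_lt_iff (Or.inl (by norm_num)) (Or.inl (by norm_num))).mp h1
      calc 2 * (vI * vJ) < 2 * (volume (DyadicRect.set (I, J) ∩ F) * 2) := by
            refine (ENNReal.mul_lt_mul_iff_right (by norm_num) (by norm_num)).mpr h2
        _ = 4 * volume (DyadicRect.set (I, J) ∩ F) := by ring
    exact absurd (lt_of_lt_of_le hlow hup) (lt_irrefl _)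
  -- conclude the inclusion
  rintro ⟨s, t⟩ ⟨hs, ht⟩
  refine ⟨I, hs, ?_⟩
  have hsub : G ⊆ I.set ∩ {σ | (σ, t) ∈ Eright F} := by
    rintro σ ⟨hσI, hσ⟩
    exact ⟨hσI, ⟨J, ht, hσ⟩⟩
  calc vI < 4 * volume G := hGvol
    _ ≤ 4 * volume (I.set ∩ {σ | (σ, t) ∈ Eright F}) := by
        gcongr

/-- `‖f_n‖₂² ≤ C 2^{2n} |F_n|` with an absolute constant `C`. -/
theorem atom_l2_estimate :
    ∃ C : ℝ, 0 < C ∧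
      ∀ p : ℝ, 0 < p → p ≤ 2 →
        ∀ f : DyadicRect → ℝ, Hnorm p f ≠ ∞ →
          ∀ n : ℤ,
            l2norm (fAtom f n) ^ (2:ℝ) ≤
              ENNReal.ofReal C * (2 : ℝ≥0∞) ^ (2 * (n:ℝ)) * volume (Fset f n) := by
  classical
  refine ⟨128, by norm_num, ?_⟩
  intro p hp hp2 f hf n
  set F := Fset f n with hFdef
  set F' := Fset f (n + 1) with hF'def
  have hF : MeasurableSet F := measurableSet_Fset f n
  have hF' : MeasurableSet F' := measurableSet_Fset f (n + 1)
  set E := DyadicCover.Eleft (DyadicCover.Eright F) with hEdef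
  have hEmeas : MeasurableSet E :=
    DyadicCover.measurableSet_Eleft (DyadicCover.measurableSet_Eright hF)
  set c : DyadicRect → ℝ≥0∞ := fun R => ENNReal.ofReal (fAtom f n R ^ 2) with hc
  -- LHS = T
  have hLHS : l2norm (fAtom f n) ^ (2:ℝ) = ∑' R : DyadicRect, c R * ENNReal.ofReal R.area := by
    rw [l2norm, ← ENNReal.rpow_mul]
    norm_num
    rfl
  set T := ∑' R : DyadicRect, c R * ENNReal.ofReal R.area with hT
  -- Step 1 : per-rectangle bound
  have hstep1 : ∀ R : DyadicRect,
      c R * ENNReal.ofReal R.area ≤ 2 * (c R * volume (R.set ∩ F'ᶜ)) := by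
    intro R
    by_cases hR : R ∈ Rcoll f n
    · have h2 := hR.2
      have hdiff : R.set \ F' = R.set ∩ F'ᶜ := Set.diff_eq R.set F'
      have hsub : ENNReal.ofReal R.area ≤ 2 * volume (R.set ∩ F'ᶜ) := by
        have h3 := measure_le_inter_add_diff volume R.set F'
        rw [← R.volume_set] at h2 ⊢
        rw [hdiff] at h3
        have hfin : volume R.set ≠ ⊤ := R.volume_set_ne_top
        have h4 : volume R.set ≤ volume R.set / 2 + volume (R.set ∩ F'ᶜ) :=
          h3.trans (by gcongr)
        have h5 : volume R.set - volume R.set / 2 ≤ volume (R.set ∩ F'ᶜ) := by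
          rw [tsub_le_iff_right]
          rw [add_comm] at h4
          exact h4
        rw [ENNReal.sub_half hfin] at h5
        calc volume R.set = volume R.set / 2 + volume R.set / 2 := (ENNReal.add_halves _).symm
          _ ≤ volume (R.set ∩ F'ᶜ) + volume (R.set ∩ F'ᶜ) := by gcongr
          _ = 2 * volume (R.set ∩ F'ᶜ) := by ring
      calc c R * ENNReal.ofReal R.area ≤ c R * (2 * volume (R.set ∩ F'ᶜ)) := by gcongr
        _ = 2 * (c R * volume (R.set ∩ F'ᶜ)) := by ring
    · have : c R = 0 := by
        rw [hc]
        simp only [fAtom, Set.indicator_of_notMem hR]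
        norm_num
      rw [this]
      simp
  -- Step 2 : tsum → integral
  have hstep2 : T ≤ 2 * ∫⁻ x in F'ᶜ, ∑' R : DyadicRect, R.set.indicator (fun _ => c R) x := by
    calc T ≤ ∑' R : DyadicRect, 2 * (c R * volume (R.set ∩ F'ᶜ)) :=
          ENNReal.tsum_le_tsum hstep1
      _ = 2 * ∑' R : DyadicRect, c R * volume (R.set ∩ F'ᶜ) := ENNReal.tsum_mul_left
      _ = 2 * ∑' R : DyadicRect, ∫⁻ x in F'ᶜ, R.set.indicator (fun _ => c R) x := by
          congr 1
          refine tsum_congr fun R => ?_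
          rw [lintegral_indicator_const R.measurableSet_set,
            Measure.restrict_apply R.measurableSet_set]
      _ = 2 * ∫⁻ x in F'ᶜ, ∑' R : DyadicRect, R.set.indicator (fun _ => c R) x := by
          rw [lintegral_tsum fun R => (measurable_const.indicator R.measurableSet_set).aemeasurable]
  -- Step 3 : pointwise bound on F'ᶜ
  have hpt : ∀ x ∈ F'ᶜ, (∑' R : DyadicRect, R.set.indicator (fun _ => c R) x)
      ≤ E.indicator (fun _ => (2:ℝ≥0∞) ^ (2 * (n:ℝ) + 2)) x := by
    intro x hx
    by_cases hxE : x ∈ E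
    · rw [Set.indicator_of_mem hxE]
      by_cases hxU : x ∈ unitSq
      · have hsq : sqS f x ≤ (2:ℝ≥0∞) ^ (((n+1 : ℤ)):ℝ) := by
          by_contra hcon
          push_neg at hcon
          exact hx ⟨hxU, hcon⟩
        have h1 : (∑' R : DyadicRect, R.set.indicator (fun _ => c R) x)
            ≤ ∑' R : DyadicRect, R.set.indicator (fun _ => ENNReal.ofReal (f R ^ 2)) x := by
          refine ENNReal.tsum_le_tsum fun R => Set.indicator_le_indicator ?_
          refine ENNReal.ofReal_le_ofReal ?_
          rw [fAtom]
          by_cases hR : R ∈ Rcoll f n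
          · rw [Set.indicator_of_mem hR]
          · rw [Set.indicator_of_notMem hR]
            simpa using sq_nonneg (f R)
        have h2 : (∑' R : DyadicRect, R.set.indicator (fun _ => ENNReal.ofReal (f R ^ 2)) x)
            = sqS f x ^ (2:ℝ) := by
          rw [sqS, ← ENNReal.rpow_mul]
          norm_num
        calc (∑' R : DyadicRect, R.set.indicator (fun _ => c R) x)
            ≤ sqS f x ^ (2:ℝ) := h1.trans_eq h2
          _ ≤ ((2:ℝ≥0∞) ^ (((n+1 : ℤ)):ℝ)) ^ (2:ℝ) := ENNReal.rpow_le_rpow hsq (by norm_num)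
          _ = (2:ℝ≥0∞) ^ (2 * (n:ℝ) + 2) := by
              rw [← ENNReal.rpow_mul]
              congr 1
              push_cast
              ring
      · have hz : ∀ R : DyadicRect, R.set.indicator (fun _ => c R) x = 0 := by
          intro R
          refine Set.indicator_of_notMem (fun hmem => hxU (R.set_subset_unitSq hmem)) _
        simp only [hz, tsum_zero]
        exact zero_le
    · rw [Set.indicator_of_notMem hxE]
      rw [nonpos_iff_eq_zero, ENNReal.tsum_eq_zero]
      intro R
      by_cases hxR : x ∈ R.set
      · rw [Set.indicator_of_mem hxR]
        by_cases hR : R ∈ Rcoll f n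
        · exact absurd (rcoll_subset f n hR hxR) hxE
        · rw [hc]
          simp only [fAtom, Set.indicator_of_notMem hR]
          norm_num
      · exact Set.indicator_of_notMem hxR _
  -- Step 4 : integrate the pointwise bound
  have hstep4 : (∫⁻ x in F'ᶜ, ∑' R : DyadicRect, R.set.indicator (fun _ => c R) x)
      ≤ (2:ℝ≥0∞) ^ (2 * (n:ℝ) + 2) * volume E := by
    calc (∫⁻ x in F'ᶜ, ∑' R : DyadicRect, R.set.indicator (fun _ => c R) x)
        ≤ ∫⁻ x in F'ᶜ, E.indicator (fun _ => (2:ℝ≥0∞) ^ (2 * (n:ℝ) + 2)) x :=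
          setLIntegral_mono (measurable_const.indicator hEmeas) hpt
      _ ≤ ∫⁻ x, E.indicator (fun _ => (2:ℝ≥0∞) ^ (2 * (n:ℝ) + 2)) x :=
          setLIntegral_le_lintegral _ _
      _ = (2:ℝ≥0∞) ^ (2 * (n:ℝ) + 2) * volume E := lintegral_indicator_const hEmeas _
  -- Step 5 : measure of E
  have hE : volume E ≤ 16 * volume F := by
    calc volume E ≤ 4 * volume (DyadicCover.Eright F) :=
          DyadicCover.volume_Eleft_le (DyadicCover.measurableSet_Eright hF)
      _ ≤ 4 * (4 * volume F) := by
          gcongr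
          exact DyadicCover.volume_Eright_le hF
      _ = 16 * volume F := by ring
  -- put it together
  rw [hLHS]
  calc T ≤ 2 * ((2:ℝ≥0∞) ^ (2 * (n:ℝ) + 2) * volume E) := by
        refine hstep2.trans ?_
        gcongr
      _ ≤ 2 * ((2:ℝ≥0∞) ^ (2 * (n:ℝ) + 2) * (16 * volume F)) := by gcongr
      _ = ENNReal.ofReal 128 * (2:ℝ≥0∞) ^ (2 * (n:ℝ)) * volume F := by
          rw [ENNReal.rpow_add _ _ (by norm_num) (by norm_num)]
          rw [show ((2:ℝ≥0∞) ^ (2:ℝ)) = 4 by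
            rw [show (2:ℝ) = ((2:ℕ):ℝ) by norm_num, ENNReal.rpow_natCast]; norm_num]
          rw [show (ENNReal.ofReal 128) = 128 from ENNReal.ofReal_ofNat 128]
          ring
end

section
/- Let 0 < p ≤ 2, 0 < θ < 1, and let q be defined by 1/q = (1−θ)/p + θ/2. Then for every f = (f_{IJ}) ∈ H^p(δ²) and every g = (g_{IJ}) ∈ H²(δ²): ‖∑_{I×J} |f_{IJ}|^{1−θ}|g_{IJ}|^{θ} h_{I×J}‖_{H^q(δ²)} ≤ ‖f‖_{H^p(δ²)}^{1−θ} · ‖g‖₂^{θ}. -/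
open MeasureTheory Set
open scoped ENNReal

section InterpAux

instance : Countable DyadicInterval := by
  have hinj : Function.Injective (fun I : DyadicInterval => (I.n, I.k)) := by
    rintro ⟨n, k, h⟩ ⟨n', k', h'⟩ heq
    simp_all
  exact hinj.countable

lemma DyadicRect.meas (R : DyadicRect) : MeasurableSet R.set :=
  measurableSet_Ico.prod measurableSet_Ico

lemma DyadicInterval.len_nonneg (I : DyadicInterval) : 0 ≤ I.len := by
  unfold DyadicInterval.len; positivity

lemma DyadicRect.volume_set_s9 (R : DyadicRect) : volume R.set = ENNReal.ofReal R.area := by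
  have h1 : ∀ I : DyadicInterval, volume I.set = ENNReal.ofReal I.len := by
    intro I
    rw [DyadicInterval.set, Real.volume_Ico]
    congr 1
    rw [DyadicInterval.right, DyadicInterval.left, DyadicInterval.len]
    ring
  rw [DyadicRect.set, Measure.volume_eq_prod, Measure.prod_prod, h1, h1, DyadicRect.area,
    ← ENNReal.ofReal_mul R.1.len_nonneg]

lemma tsum_holder {ι : Type*} [Countable ι] (a b : ι → ℝ≥0∞) {θ : ℝ}
    (hθ0 : 0 < θ) (hθ1 : θ < 1) :
    ∑' i, a i ^ (1-θ) * b i ^ θ ≤ (∑' i, a i) ^ (1-θ) * (∑' i, b i) ^ θ := by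
  letI : MeasurableSpace ι := ⊤
  have h1θ : (0:ℝ) < 1 - θ := by linarith
  have hpq : Real.HolderConjugate (1/(1-θ)) (1/θ) := by
    rw [Real.holderConjugate_iff]; constructor
    · rw [lt_div_iff₀ h1θ]; linarith
    · rw [one_div, one_div, inv_inv, inv_inv]; ring
  have key := ENNReal.lintegral_mul_le_Lp_mul_Lq (Measure.count : Measure ι) hpq
      (f := fun i => a i ^ (1-θ)) (g := fun i => b i ^ θ)
      measurable_from_top.aemeasurable measurable_from_top.aemeasurable
  simp only [Pi.mul_apply] at key
  rw [lintegral_count, lintegral_count, lintegral_count] at key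
  have e1 : ∀ i, (a i ^ (1-θ)) ^ (1/(1-θ)) = a i := fun i => by
    rw [← ENNReal.rpow_mul, mul_one_div, div_self h1θ.ne', ENNReal.rpow_one]
  have e2 : ∀ i, (b i ^ θ) ^ (1/θ) = b i := fun i => by
    rw [← ENNReal.rpow_mul, mul_one_div, div_self hθ0.ne', ENNReal.rpow_one]
  simp only [e1, e2, one_div_one_div] at key
  exact key

lemma sqS_pointwise (f g : DyadicRect → ℝ) {θ : ℝ} (hθ0 : 0 < θ) (hθ1 : θ < 1) (x : ℝ × ℝ) :
    sqS (fun R => |f R| ^ (1-θ) * |g R| ^ θ) x ≤ sqS f x ^ (1-θ) * sqS g x ^ θ := by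
  have h1θ : (0:ℝ) < 1 - θ := by linarith
  set a : DyadicRect → ℝ≥0∞ :=
    fun R => Set.indicator R.set (fun _ => ENNReal.ofReal (f R ^ 2)) x with ha
  set b : DyadicRect → ℝ≥0∞ :=
    fun R => Set.indicator R.set (fun _ => ENNReal.ofReal (g R ^ 2)) x with hb
  have key : ∀ R : DyadicRect,
      Set.indicator R.set
        (fun _ => ENNReal.ofReal ((|f R| ^ (1-θ) * |g R| ^ θ) ^ 2)) x
        = a R ^ (1-θ) * b R ^ θ := by
    intro R
    by_cases hx : x ∈ R.set
    · simp only [Set.indicator_of_mem hx, ha, hb]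
      have habs : ∀ (c e : ℝ), 0 ≤ e → (|c| ^ e) ^ 2 = (c ^ 2) ^ e := by
        intro c e he
        rw [← Real.rpow_natCast (|c| ^ e) 2, ← Real.rpow_mul (abs_nonneg c), mul_comm,
          Real.rpow_mul (abs_nonneg c), Real.rpow_natCast, sq_abs]
      rw [mul_pow, habs _ _ h1θ.le, habs _ _ hθ0.le,
        ENNReal.ofReal_mul (Real.rpow_nonneg (sq_nonneg _) _),
        ← ENNReal.ofReal_rpow_of_nonneg (sq_nonneg _) h1θ.le,
        ← ENNReal.ofReal_rpow_of_nonneg (sq_nonneg _) hθ0.le]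
    · simp only [Set.indicator_of_notMem hx, ha, hb]
      rw [ENNReal.zero_rpow_of_pos h1θ, ENNReal.zero_rpow_of_pos hθ0, mul_zero]
  rw [sqS]
  have hre : (∑' R : DyadicRect, Set.indicator R.set
      (fun _ => ENNReal.ofReal ((fun R => |f R| ^ (1-θ) * |g R| ^ θ) R ^ 2)) x)
      = ∑' R : DyadicRect, a R ^ (1-θ) * b R ^ θ := tsum_congr key
  rw [hre]
  calc (∑' R : DyadicRect, a R ^ (1-θ) * b R ^ θ) ^ (1/2 : ℝ)
      ≤ ((∑' R, a R) ^ (1-θ) * (∑' R, b R) ^ θ) ^ (1/2 : ℝ) :=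
        ENNReal.rpow_le_rpow (tsum_holder a b hθ0 hθ1) (by norm_num)
    _ = sqS f x ^ (1-θ) * sqS g x ^ θ := by
        rw [ENNReal.mul_rpow_of_nonneg _ _ (by norm_num : (0:ℝ) ≤ 1/2), sqS, sqS,
          ← ENNReal.rpow_mul, ← ENNReal.rpow_mul, ← ENNReal.rpow_mul, ← ENNReal.rpow_mul,
          mul_comm (1-θ) (1/2:ℝ), mul_comm θ (1/2:ℝ)]

lemma lint_sq_le (g : DyadicRect → ℝ) :
    ∫⁻ x in unitSq, sqS g x ^ (2:ℝ) ≤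
      ∑' R : DyadicRect, ENNReal.ofReal (g R ^ 2) * ENNReal.ofReal R.area := by
  have hpt : ∀ x, sqS g x ^ (2:ℝ)
      = ∑' R : DyadicRect, Set.indicator R.set (fun _ => ENNReal.ofReal (g R ^ 2)) x := by
    intro x
    rw [sqS, ← ENNReal.rpow_mul]
    norm_num
  simp_rw [hpt]
  rw [lintegral_tsum (fun R => (measurable_const.indicator R.meas).aemeasurable)]
  refine ENNReal.tsum_le_tsum fun R => ?_
  rw [lintegral_indicator R.meas _, setLIntegral_const, Measure.restrict_apply R.meas]
  refine mul_le_mul_right ?_ _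
  calc volume (R.set ∩ unitSq) ≤ volume R.set := measure_mono Set.inter_subset_left
    _ = ENNReal.ofReal R.area := R.volume_set_s9

end InterpAux

/-- the right-hand inequality of Theorem 4.1:
`‖∑ |f_{IJ}|^{1-θ}|g_{IJ}|^θ h_{I×J}‖_{H^q} ≤ ‖f‖_{H^p}^{1-θ} ‖g‖₂^θ`. -/
theorem interpolation_upper (p θ q : ℝ) (hp0 : 0 < p) (hp2 : p ≤ 2)
    (hθ0 : 0 < θ) (hθ1 : θ < 1) (hq : 1/q = (1-θ)/p + θ/2)
    (f g : DyadicRect → ℝ) (hf : Hnorm p f ≠ ∞) (hg : l2norm g ≠ ∞) :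
    Hnorm q (fun R => |f R| ^ (1-θ) * |g R| ^ θ) ≤
      Hnorm p f ^ (1-θ) * l2norm g ^ θ := by
  have h1θ : (0:ℝ) < 1 - θ := by linarith
  have hq0 : 0 < q := by
    have h : 0 < 1/q := by
      rw [hq]
      have := div_pos h1θ hp0
      have := div_pos hθ0 two_pos
      linarith
    exact one_div_pos.mp h
  have key : (1-θ)*q/p + θ*q/2 = 1 := by
    have h1 : q * (1/q) = 1 := by field_simp
    rw [hq] at h1
    ring_nf at h1 ⊢
    linarith
  have hA : (0:ℝ) < (1-θ)*q := mul_pos h1θ hq0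
  have hB : (0:ℝ) < θ*q := mul_pos hθ0 hq0
  have hBB : (0:ℝ) < θ*q/2 := div_pos hB two_pos
  have hconj : Real.HolderConjugate (p/((1-θ)*q)) (2/(θ*q)) := by
    rw [Real.holderConjugate_iff]; constructor
    · rw [lt_div_iff₀ hA]
      rw [one_mul]
      have h1 : (1-θ)*q/p < 1 := by linarith
      exact (div_lt_one hp0).mp h1
    · rw [inv_div, inv_div]
      exact key
  set h : DyadicRect → ℝ := fun R => |f R| ^ (1-θ) * |g R| ^ θ with hh
  have step1 : ∫⁻ x in unitSq, sqS h x ^ q ≤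
      ∫⁻ x in unitSq, (sqS f x ^ ((1-θ)*q)) * (sqS g x ^ (θ*q)) := by
    refine lintegral_mono fun x => ?_
    calc sqS h x ^ q ≤ (sqS f x ^ (1-θ) * sqS g x ^ θ) ^ q :=
          ENNReal.rpow_le_rpow (sqS_pointwise f g hθ0 hθ1 x) hq0.le
      _ = _ := by
          rw [ENNReal.mul_rpow_of_nonneg _ _ hq0.le, ← ENNReal.rpow_mul, ← ENNReal.rpow_mul]
  have step2 : ∫⁻ x in unitSq, (sqS f x ^ ((1-θ)*q)) * (sqS g x ^ (θ*q)) ≤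
      (∫⁻ x in unitSq, sqS f x ^ p) ^ ((1-θ)*q/p) *
        (∫⁻ x in unitSq, sqS g x ^ (2:ℝ)) ^ (θ*q/2) := by
    have hmf : AEMeasurable (fun x => sqS f x ^ ((1-θ)*q)) (volume.restrict unitSq) :=
      ((measurable_sqS f).pow measurable_const).aemeasurable
    have hmg : AEMeasurable (fun x => sqS g x ^ (θ*q)) (volume.restrict unitSq) :=
      ((measurable_sqS g).pow measurable_const).aemeasurable
    have := ENNReal.lintegral_mul_le_Lp_mul_Lq (volume.restrict unitSq) hconj hmf hmg
    simp only [Pi.mul_apply] at this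
    have e1 : ∀ x, (sqS f x ^ ((1-θ)*q)) ^ (p/((1-θ)*q)) = sqS f x ^ p := fun x => by
      rw [← ENNReal.rpow_mul, mul_div_cancel₀ _ hA.ne']
    have e2 : ∀ x, (sqS g x ^ (θ*q)) ^ (2/(θ*q)) = sqS g x ^ (2:ℝ) := fun x => by
      rw [← ENNReal.rpow_mul, mul_div_cancel₀ _ hB.ne']
    have e3 : 1/(p/((1-θ)*q)) = (1-θ)*q/p := one_div_div _ _
    have e4 : 1/(2/(θ*q)) = θ*q/2 := one_div_div _ _
    simp only [e1, e2, e3, e4] at this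
    exact this
  have step3 : Hnorm q h ≤
      ((∫⁻ x in unitSq, sqS f x ^ p) ^ ((1-θ)*q/p) *
        (∫⁻ x in unitSq, sqS g x ^ (2:ℝ)) ^ (θ*q/2)) ^ (1/q) := by
    rw [Hnorm]
    exact ENNReal.rpow_le_rpow (step1.trans step2) (by positivity)
  refine step3.trans ?_
  rw [ENNReal.mul_rpow_of_nonneg _ _ (by positivity : (0:ℝ) ≤ 1/q),
    ← ENNReal.rpow_mul, ← ENNReal.rpow_mul]
  have e5 : (1-θ)*q/p * (1/q) = (1/p) * (1-θ) := by field_simp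
  have e6 : θ*q/2 * (1/q) = (1/2) * θ := by field_simp
  rw [e5, e6, ENNReal.rpow_mul, Hnorm]
  refine mul_le_mul_right ?_ _
  calc (∫⁻ x in unitSq, sqS g x ^ (2:ℝ)) ^ ((1/2) * θ)
      ≤ (∑' R : DyadicRect, ENNReal.ofReal (g R ^ 2) * ENNReal.ofReal R.area) ^ ((1/2 : ℝ) * θ) :=
        ENNReal.rpow_le_rpow (lint_sq_le g) (by positivity)
    _ = l2norm g ^ θ := by rw [ENNReal.rpow_mul, l2norm]
end
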